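/- For all d ∈ (-0.5, 1.5), ρ(d) = (4^{d+1.5} - 9^{d+0.5} - 7) / (2(4 - 4^{d+0.5})) lies in the open interval (-1, 1), where at d = 0.5 the value is defined by continuous extension. -/

import Mathlib

open Set

open Real Filter in
/-- slope function `(exp (c*u) - 1)/u`, extended by `c` at `0`. -/
noncomputable def ggAux (c u : ℝ) : ℝ := if u = 0 then c else (Real.exp (c * u) - 1) / u

open Real Filter Topology

lemma ggAux_ne (c : ℝ) {u : ℝ} (hu : u ≠ 0) :
    ggAux c u = (Real.exp (c * u) - 1) / u := if_neg hu

lemma ggAux_pos {c : ℝ} (hc : 0 < c) (u : ℝ) : 0 < ggAux c u := by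
  rcases lt_trichotomy u 0 with h | rfl | h
  · rw [ggAux_ne c h.ne]
    apply div_pos_of_neg_of_neg _ h
    have : Real.exp (c * u) < 1 := by
      rw [show (1:ℝ) = Real.exp 0 by simp]
      exact Real.exp_lt_exp.2 (by nlinarith)
    linarith
  · simpa [ggAux] using hc
  · rw [ggAux_ne c h.ne']
    apply div_pos _ h
    have : (1:ℝ) < Real.exp (c * u) := by
      rw [show (1:ℝ) = Real.exp 0 by simp]
      exact Real.exp_lt_exp.2 (by nlinarith)
    linarith

lemma continuous_ggAux (c : ℝ) : Continuous (ggAux c) := by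
  rw [continuous_iff_continuousAt]
  intro u
  rcases eq_or_ne u 0 with rfl | hu
  · have hd : HasDerivAt (fun v : ℝ => Real.exp (c * v)) c 0 := by
      simpa [Function.comp_def] using (Real.hasDerivAt_exp (c * 0)).comp 0 ((hasDerivAt_id (0:ℝ)).const_mul c)
    have hs : Tendsto (slope (fun v : ℝ => Real.exp (c * v)) 0) (𝓝[≠] (0:ℝ)) (𝓝 c) :=
      hasDerivAt_iff_tendsto_slope.1 hd
    have hs' : Tendsto (ggAux c) (𝓝[≠] (0:ℝ)) (𝓝 c) := by
      refine hs.congr' ?_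
      filter_upwards [self_mem_nhdsWithin] with v hv
      rw [slope_def_field, ggAux_ne c hv]
      simp [div_eq_div_iff]
    have hgg0 : ggAux c 0 = c := if_pos rfl
    have hp : Tendsto (ggAux c) (pure (0:ℝ)) (𝓝 c) := by
      have := tendsto_pure_nhds (ggAux c) 0
      rwa [hgg0] at this
    have : Tendsto (ggAux c) (𝓝 (0:ℝ)) (𝓝 c) := by
      rw [← nhdsNE_sup_pure (0:ℝ)]
      exact Tendsto.sup hs' hp
    simpa [ContinuousAt, ggAux] using this
  · have hc : ContinuousAt (fun v : ℝ => (Real.exp (c * v) - 1) / v) u := by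
      apply ContinuousAt.div
      · fun_prop
      · exact continuousAt_id
      · exact hu
    apply hc.congr
    filter_upwards [isOpen_compl_singleton.mem_nhds (by simpa using hu)] with v hv
    rw [ggAux_ne c (by simpa using hv)]

/-- key convexity inequality, case `0 < u < 2` -/
lemma key_pos {u : ℝ} (h0 : 0 < u) (h2 : u < 2) :
    3 * (3:ℝ) ^ u < 8 * (2:ℝ) ^ u - 5 := by
  set α := Real.logb 2 3 with hαdef
  have hα : 1 < α := by
    rw [hαdef, Real.lt_logb_iff_rpow_lt one_lt_two (by norm_num)]
    norm_num
  set x := (2:ℝ) ^ u with hxdef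
  have hx1 : 1 < x := Real.one_lt_rpow_iff_of_pos two_pos |>.2 (Or.inl ⟨one_lt_two, h0⟩)
  have hx4 : x < 4 := by
    have : (2:ℝ) ^ u < (2:ℝ) ^ (2:ℝ) := (Real.rpow_lt_rpow_left_iff one_lt_two).2 h2
    calc x < (2:ℝ) ^ (2:ℝ) := this
      _ = 4 := by rw [show (2:ℝ) = ((2:ℕ):ℝ) from by norm_num, Real.rpow_natCast]; norm_num
  have hxα : x ^ α = (3:ℝ) ^ u := by
    rw [hxdef, ← Real.rpow_mul (by norm_num), mul_comm, Real.rpow_mul (by norm_num),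
      Real.rpow_logb two_pos (by norm_num) (by norm_num)]
  have h4α : (4:ℝ) ^ α = 9 := by
    have h49 : Real.logb 2 3 = Real.logb 4 9 := by
      rw [Real.logb, Real.logb, show (4:ℝ) = 2^(2:ℕ) by norm_num, show (9:ℝ) = 3^(2:ℕ) by norm_num,
        Real.log_pow, Real.log_pow]
      rw [div_eq_div_iff (by positivity) (by positivity)]
      ring
    rw [hαdef, h49, Real.rpow_logb (by norm_num) (by norm_num) (by norm_num)]
  have sc := strictConvexOn_rpow hα
  have key := sc.2 (show (1:ℝ) ∈ Ici 0 by norm_num) (show (4:ℝ) ∈ Ici 0 by norm_num)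
    (show (1:ℝ) ≠ 4 by norm_num)
    (show (0:ℝ) < (4 - x)/3 by linarith) (show (0:ℝ) < (x - 1)/3 by linarith)
    (show (4 - x)/3 + (x - 1)/3 = 1 by ring)
  simp only [smul_eq_mul] at key
  rw [Real.one_rpow, h4α] at key
  have hcomb : (4 - x)/3 * 1 + (x - 1)/3 * 4 = x := by ring
  rw [hcomb, hxα] at key
  nlinarith [key]

/-- key convexity inequality, case `u < 0` -/
lemma key_neg {u : ℝ} (h0 : u < 0) :
    8 * (2:ℝ) ^ u - 5 < 3 * (3:ℝ) ^ u := by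
  set α := Real.logb 2 3 with hαdef
  have hα : 1 < α := by
    rw [hαdef, Real.lt_logb_iff_rpow_lt one_lt_two (by norm_num)]
    norm_num
  set x := (2:ℝ) ^ u with hxdef
  have hx0 : 0 < x := Real.rpow_pos_of_pos two_pos u
  have hx1 : x < 1 := Real.rpow_lt_one_of_one_lt_of_neg one_lt_two h0
  have hxα : x ^ α = (3:ℝ) ^ u := by
    rw [hxdef, ← Real.rpow_mul (by norm_num), mul_comm, Real.rpow_mul (by norm_num),
      Real.rpow_logb two_pos (by norm_num) (by norm_num)]
  have h4α : (4:ℝ) ^ α = 9 := by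
    have h49 : Real.logb 2 3 = Real.logb 4 9 := by
      rw [Real.logb, Real.logb, show (4:ℝ) = 2^(2:ℕ) by norm_num, show (9:ℝ) = 3^(2:ℕ) by norm_num,
        Real.log_pow, Real.log_pow]
      rw [div_eq_div_iff (by positivity) (by positivity)]
      ring
    rw [hαdef, h49, Real.rpow_logb (by norm_num) (by norm_num) (by norm_num)]
  have sc := strictConvexOn_rpow hα
  have hne : x ≠ 4 := by linarith
  have h4x : (0:ℝ) < 4 - x := by linarith
  have key := sc.2 (show x ∈ Ici 0 from le_of_lt hx0) (show (4:ℝ) ∈ Ici 0 by norm_num) hne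
    (show (0:ℝ) < 3/(4 - x) by positivity) (show (0:ℝ) < (1 - x)/(4 - x) from div_pos (by linarith) h4x)
    (show 3/(4 - x) + (1 - x)/(4 - x) = 1 by
      rw [← add_div, div_eq_one_iff_eq h4x.ne']; ring)
  simp only [smul_eq_mul] at key
  rw [h4α] at key
  have hcomb : 3/(4 - x) * x + (1 - x)/(4 - x) * 4 = 1 := by field_simp; ring
  rw [hcomb, Real.one_rpow, hxα] at key
  rw [div_mul_eq_mul_div, div_mul_eq_mul_div, ← add_div, lt_div_iff₀ h4x] at key
  nlinarith [key]

lemma div_aux {u : ℝ} (hu : u ≠ 0) (a b : ℝ) : (a/u)/(b/u) = a/b := by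
  rw [div_div_div_comm, div_self hu, div_one]

noncomputable def rhoAux (d : ℝ) : ℝ :=
  -2 + (9/8) * (ggAux (Real.log 3) (2*d - 1) / ggAux (Real.log 2) (2*d - 1))

lemma ratio_bounds {u : ℝ} (h2 : -2 < u) (h2' : u < 2) :
    8/9 < ggAux (Real.log 3) u / ggAux (Real.log 2) u ∧
    ggAux (Real.log 3) u / ggAux (Real.log 2) u < 8/3 := by
  have hl2 : (0:ℝ) < Real.log 2 := Real.log_pos one_lt_two
  have hl3 : (0:ℝ) < Real.log 3 := Real.log_pos (by norm_num)
  rcases eq_or_ne u 0 with rfl | hu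
  · rw [show ggAux (Real.log 3) 0 = Real.log 3 from if_pos rfl,
      show ggAux (Real.log 2) 0 = Real.log 2 from if_pos rfl]
    constructor
    · rw [lt_div_iff₀ hl2]
      have : (8:ℝ)/9 * Real.log 2 < Real.log 2 := by nlinarith
      calc (8:ℝ)/9 * Real.log 2 < Real.log 2 := this
        _ < Real.log 3 := Real.log_lt_log two_pos (by norm_num)
    · rw [div_lt_iff₀ hl2]
      have h1 : (3:ℝ) * Real.log 3 = Real.log 27 := by
        rw [show (27:ℝ) = 3^(3:ℕ) by norm_num, Real.log_pow]; push_cast; ring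
      have h2 : (8:ℝ) * Real.log 2 = Real.log 256 := by
        rw [show (256:ℝ) = 2^(8:ℕ) by norm_num, Real.log_pow]; push_cast; ring
      have : Real.log 27 < Real.log 256 := Real.log_lt_log (by norm_num) (by norm_num)
      nlinarith [this]
  · have he3 : Real.exp (Real.log 3 * u) = (3:ℝ) ^ u :=
      (Real.rpow_def_of_pos (by norm_num) u).symm
    have he2 : Real.exp (Real.log 2 * u) = (2:ℝ) ^ u :=
      (Real.rpow_def_of_pos (by norm_num) u).symm
    rw [ggAux_ne _ hu, ggAux_ne _ hu, he3, he2, div_aux hu _ _]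
    rcases lt_or_gt_of_ne hu with hneg | hpos
    · have hx1 : (2:ℝ) ^ u < 1 := Real.rpow_lt_one_of_one_lt_of_neg one_lt_two hneg
      have hy1 : (3:ℝ) ^ u < 1 := Real.rpow_lt_one_of_one_lt_of_neg (by norm_num) hneg
      have hyx : (3:ℝ) ^ u < (2:ℝ) ^ u := Real.rpow_lt_rpow_of_neg two_pos (by norm_num) hneg
      have hD : (2:ℝ) ^ u - 1 < 0 := by linarith
      have hrw : ((3:ℝ) ^ u - 1) / ((2:ℝ) ^ u - 1) = (1 - (3:ℝ)^u) / (1 - (2:ℝ)^u) := by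
        rw [div_eq_div_iff (by linarith) (by linarith)]; ring
      rw [hrw]
      have hkey := key_neg hneg
      constructor
      · rw [lt_div_iff₀ (by linarith)]; nlinarith
      · rw [div_lt_iff₀ (by linarith)]; nlinarith
    · have hx1 : (1:ℝ) < (2:ℝ) ^ u :=
        Real.one_lt_rpow_iff_of_pos two_pos |>.2 (Or.inl ⟨one_lt_two, hpos⟩)
      have hyx : (2:ℝ) ^ u < (3:ℝ) ^ u := Real.rpow_lt_rpow (by norm_num) (by norm_num) hpos
      have hkey := key_pos hpos h2'
      constructor
      · rw [lt_div_iff₀ (by linarith)]; nlinarith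
      · rw [div_lt_iff₀ (by linarith)]; nlinarith

theorem rho_mem_Ioo :
    ∃ ρ : ℝ → ℝ,
      ContinuousOn ρ (Ioo (-0.5 : ℝ) 1.5) ∧
      (∀ d ∈ Ioo (-0.5 : ℝ) 1.5, d ≠ 0.5 →
        ρ d = ((4:ℝ) ^ (d + 1.5) - 9 ^ (d + 0.5) - 7) / (2 * (4 - 4 ^ (d + 0.5)))) ∧
      (∀ d ∈ Ioo (-0.5 : ℝ) 1.5, ρ d ∈ Ioo (-1 : ℝ) 1) := by
  have hl2 : (0:ℝ) < Real.log 2 := Real.log_pos one_lt_two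
  have hl3 : (0:ℝ) < Real.log 3 := Real.log_pos (by norm_num)
  refine ⟨rhoAux, ?_, ?_, ?_⟩
  · apply Continuous.continuousOn
    unfold rhoAux
    refine continuous_const.add (continuous_const.mul (Continuous.div ?_ ?_ ?_))
    · exact (continuous_ggAux _).comp (by continuity)
    · exact (continuous_ggAux _).comp (by continuity)
    · intro d; exact (ggAux_pos hl2 _).ne'
  · intro d _ hd
    have hu : 2*d - 1 ≠ 0 := by
      intro h
      apply hd
      have : d = 0.5 := by norm_num at h ⊢; linarith
      exact this
    set u := 2*d - 1 with hudef
    have hE2ne : Real.exp (Real.log 2 * u) - 1 ≠ 0 := by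
      intro h
      have h1 : Real.exp (Real.log 2 * u) = 1 := by linarith
      have := (Real.exp_eq_one_iff _).1 h1
      exact hu (by
        rcases mul_eq_zero.1 this with h' | h'
        · exact absurd h' (Real.log_pos one_lt_two).ne'
        · exact h')
    have hlog4 : Real.log 4 = 2 * Real.log 2 := by
      rw [show (4:ℝ) = 2^(2:ℕ) by norm_num, Real.log_pow]; push_cast; ring
    have hlog9 : Real.log 9 = 2 * Real.log 3 := by
      rw [show (9:ℝ) = 3^(2:ℕ) by norm_num, Real.log_pow]; push_cast; ring
    have h4a : (4:ℝ) ^ (d + 0.5) = 4 * Real.exp (Real.log 2 * u) := by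
      rw [Real.rpow_def_of_pos (by norm_num), hlog4,
        show 2 * Real.log 2 * (d + 0.5) = Real.log 2 * u + (Real.log 2 + Real.log 2) by
          rw [hudef]; ring,
        Real.exp_add, Real.exp_add, Real.exp_log two_pos]
      ring
    have h4b : (4:ℝ) ^ (d + 1.5) = 16 * Real.exp (Real.log 2 * u) := by
      rw [Real.rpow_def_of_pos (by norm_num), hlog4,
        show 2 * Real.log 2 * (d + 1.5)
            = Real.log 2 * u + (Real.log 2 + Real.log 2 + Real.log 2 + Real.log 2) by
          rw [hudef]; ring,
        Real.exp_add, Real.exp_add, Real.exp_add, Real.exp_add, Real.exp_log two_pos]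
      ring
    have h9 : (9:ℝ) ^ (d + 0.5) = 9 * Real.exp (Real.log 3 * u) := by
      rw [Real.rpow_def_of_pos (by norm_num), hlog9,
        show 2 * Real.log 3 * (d + 0.5) = Real.log 3 * u + (Real.log 3 + Real.log 3) by
          rw [hudef]; ring,
        Real.exp_add, Real.exp_add, Real.exp_log (by norm_num : (0:ℝ) < 3)]
      ring
    rw [h4a, h4b, h9]
    unfold rhoAux
    rw [← hudef, ggAux_ne _ hu, ggAux_ne _ hu, div_aux hu _ _]
    have hden : 2 * (4 - 4 * Real.exp (Real.log 2 * u)) ≠ 0 := by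
      intro h
      apply hE2ne
      nlinarith [h]
    rw [eq_div_iff hden, mul_comm, ← sub_eq_zero]
    field_simp
    ring
  · intro d hd
    obtain ⟨h1, h2⟩ := hd
    have hu1 : -2 < 2*d - 1 := by norm_num at h1 ⊢; linarith
    have hu2 : 2*d - 1 < 2 := by norm_num at h2 ⊢; linarith
    obtain ⟨hlo, hhi⟩ := ratio_bounds hu1 hu2
    unfold rhoAux
    constructor <;> [nlinarith; nlinarith]
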